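/- Duhamel's formula: for square matrices H(θ) depending smoothly (say, affinely: H(θ) = H₀ + θ·H₁) on a real parameter θ, the derivative of the matrix exponential satisfies ∂_θ exp(-H(θ)) = -∫₀¹ exp(-τ H(θ)) · (∂_θ H(θ)) · exp(-(1-τ) H(θ)) dτ. -/

import Mathlib

open scoped Matrix

attribute [local instance] Matrix.linftyOpNormedRing Matrix.linftyOpNormedAlgebra

open NormedSpace in
/-- The fundamental integral identity behind Duhamel's formula. -/
lemma exp_sub_exp_eq {n : ℕ} (X Y : Matrix (Fin n) (Fin n) ℂ) :
    exp X - exp Y =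
      ∫ τ in (0:ℝ)..1, exp ((τ : ℂ) • X) * (X - Y) * exp (((1:ℂ) - (τ:ℂ)) • Y) := by
  have hcoe : ∀ (r : ℝ) (M : Matrix (Fin n) (Fin n) ℂ), (r : ℂ) • M = r • M := fun r M =>
    Complex.coe_smul r M
  have hder : ∀ τ ∈ Set.uIcc (0:ℝ) 1,
      HasDerivAt (fun τ : ℝ => exp ((τ : ℂ) • X) * exp (((1:ℂ) - (τ:ℂ)) • Y))
        (exp ((τ : ℂ) • X) * (X - Y) * exp (((1:ℂ) - (τ:ℂ)) • Y)) τ := by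
    intro τ _
    have hX : HasDerivAt (fun τ : ℝ => exp ((τ : ℂ) • X))
        (exp ((τ : ℂ) • X) * X) τ := by
      simp only [hcoe]
      exact hasDerivAt_exp_smul_const (𝕂 := ℝ) X τ
    have hY : HasDerivAt (fun τ : ℝ => exp (((1:ℂ) - (τ:ℂ)) • Y))
        (-(exp (((1:ℂ) - (τ:ℂ)) • Y) * Y)) τ := by
      have h1 : ∀ τ : ℝ, ((1:ℂ) - (τ:ℂ)) • Y = (1 - τ : ℝ) • Y := by
        intro τ; rw [← hcoe]; push_cast; ring_nf
      simp only [h1]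
      have := (hasDerivAt_exp_smul_const (𝕂 := ℝ) Y (1 - τ)).scomp τ
        ((hasDerivAt_const τ (1:ℝ)).sub (hasDerivAt_id τ))
      simp [Function.comp] at this; exact this
    have := hX.mul hY
    refine this.congr_deriv ?_
    have hc : Commute (exp (((1:ℂ) - (τ:ℂ)) • Y)) Y :=
      ((Commute.refl Y).smul_left _).exp_left
    rw [hc.eq]
    noncomm_ring
  have hcont : Continuous (fun τ : ℝ =>
      exp ((τ : ℂ) • X) * (X - Y) * exp (((1:ℂ) - (τ:ℂ)) • Y)) := by
    apply Continuous.mul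
    · apply Continuous.mul
      · exact exp_continuous.comp (Complex.continuous_ofReal.smul continuous_const)
      · exact continuous_const
    · exact exp_continuous.comp
        ((continuous_const.sub Complex.continuous_ofReal).smul continuous_const)
  have := intervalIntegral.integral_eq_sub_of_hasDerivAt hder
    (hcont.intervalIntegrable 0 1)
  rw [this]
  simp [exp_zero]

/-- Duhamel's formula for the derivative of the matrix exponential along an
affine family `H(θ) = H₀ + θ • H₁`. -/
theorem duhamel_formula (n : ℕ) (H₀ H₁ : Matrix (Fin n) (Fin n) ℂ) (θ : ℝ) :
    HasDerivAt (fun t : ℝ => NormedSpace.exp (-(H₀ + (t : ℂ) • H₁)))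
      (-∫ τ in (0:ℝ)..1,
          NormedSpace.exp ((-(τ : ℂ)) • (H₀ + (θ : ℂ) • H₁)) * H₁ *
            NormedSpace.exp ((-((1 : ℂ) - (τ : ℂ))) • (H₀ + (θ : ℂ) • H₁)))
      θ := by
  set f : ℝ → Matrix (Fin n) (Fin n) ℂ :=
    fun t => NormedSpace.exp (-(H₀ + (t : ℂ) • H₁)) with hf
  set g : ℝ → Matrix (Fin n) (Fin n) ℂ := fun t =>
    ∫ τ in (0:ℝ)..1,
        NormedSpace.exp ((-(τ : ℂ)) • (H₀ + (t : ℂ) • H₁)) * H₁ *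
          NormedSpace.exp ((-((1 : ℂ) - (τ : ℂ))) • (H₀ + (θ : ℂ) • H₁)) with hg
  have hcoe : ∀ (r : ℝ) (M : Matrix (Fin n) (Fin n) ℂ), (r : ℂ) • M = r • M := fun r M =>
    Complex.coe_smul r M
  -- key identity
  have hkey : ∀ t : ℝ, f t - f θ = (-(t - θ)) • g t := by
    intro t
    have h1 := exp_sub_exp_eq (-(H₀ + (t : ℂ) • H₁)) (-(H₀ + (θ : ℂ) • H₁))
    have h2 : (-(H₀ + (t : ℂ) • H₁)) - (-(H₀ + (θ : ℂ) • H₁))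
        = ((θ : ℂ) - (t : ℂ)) • H₁ := by
      rw [sub_smul]; abel
    rw [h2] at h1
    have h3 : ∀ τ : ℝ,
        NormedSpace.exp ((τ : ℂ) • -(H₀ + (t : ℂ) • H₁)) *
            (((θ : ℂ) - (t : ℂ)) • H₁) *
            NormedSpace.exp (((1:ℂ) - (τ:ℂ)) • -(H₀ + (θ : ℂ) • H₁))
          = ((θ : ℂ) - (t : ℂ)) •
            (NormedSpace.exp ((-(τ : ℂ)) • (H₀ + (t : ℂ) • H₁)) * H₁ *
              NormedSpace.exp ((-((1 : ℂ) - (τ : ℂ))) • (H₀ + (θ : ℂ) • H₁))) := by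
      intro τ
      rw [smul_neg, ← neg_smul, smul_neg, ← neg_smul]
      rw [mul_smul_comm, smul_mul_assoc]
    simp only [h3] at h1
    rw [intervalIntegral.integral_smul] at h1
    have h4 : ((θ : ℂ) - (t : ℂ)) = ((-(t - θ) : ℝ) : ℂ) := by push_cast; ring
    rw [h4, hcoe] at h1
    exact h1
  -- continuity of `g`
  have hgc : Continuous g := by
    rw [hg]
    apply intervalIntegral.continuous_parametric_intervalIntegral_of_continuous'
      (f := fun (t τ : ℝ) =>
        NormedSpace.exp ((-(τ : ℂ)) • (H₀ + (t : ℂ) • H₁)) * H₁ *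
          NormedSpace.exp ((-((1 : ℂ) - (τ : ℂ))) • (H₀ + (θ : ℂ) • H₁)))
    refine Continuous.mul (Continuous.mul ?_ continuous_const) ?_
    · exact NormedSpace.exp_continuous.comp
        (((Complex.continuous_ofReal.comp continuous_snd).neg).smul
          (continuous_const.add
            ((Complex.continuous_ofReal.comp continuous_fst).smul continuous_const)))
    · exact NormedSpace.exp_continuous.comp
        (((continuous_const.sub (Complex.continuous_ofReal.comp continuous_snd)).neg).smul
          continuous_const)
  -- conclude via slope
  refine hasDerivAt_iff_tendsto_slope.2 ?_
  have hev : slope f θ =ᶠ[nhdsWithin θ {θ}ᶜ] fun t => -(g t) := by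
    filter_upwards [self_mem_nhdsWithin] with t ht
    have htθ : t - θ ≠ 0 := sub_ne_zero.2 ht
    rw [slope_def_module, hkey t, smul_smul]
    rw [show (t - θ)⁻¹ * -(t - θ) = -1 by field_simp]
    simp
  rw [Filter.tendsto_congr' hev]
  exact ((hgc.tendsto θ).neg).mono_left nhdsWithin_le_nhds
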